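/- For any fixed x ∈ [0,1) and k ∈ ℝ, the sequence w_n(x,k) = P(Z_{n+x} ≤ n + x + 1/3 + k/(n+x)) converges to 1/2 as n → ∞. -/

import Mathlib

open MeasureTheory ProbabilityTheory Filter Real Set
open scoped ENNReal NNReal

/-- Distribution of `Z_λ = N_λ + U`, `N_λ` Poisson(λ), `U` uniform on `(0,1)`, independent. -/
noncomputable def zMeasure (l : ℝ) : Measure ℝ :=
  Measure.map (fun p : ℝ × ℝ => p.1 + p.2)
    ((Measure.map (Nat.cast : ℕ → ℝ) (poissonMeasure l.toNNReal)).prod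
      (volume.restrict (Set.Ioo (0 : ℝ) 1)))

/-- The median of `Z_λ`: `inf {t : P(Z_λ ≤ t) ≥ 1/2}`. -/
noncomputable def medianZ (l : ℝ) : ℝ :=
  sInf {t : ℝ | (1 : ℝ≥0∞) / 2 ≤ zMeasure l (Set.Iic t)}

/-- The function `H` of the main theorem. -/
noncomputable def Hfun (x : ℝ) : ℝ :=
  if x ≤ 2 / 3 then x ^ 2 * (x - 1) / 3 + 4 / 135
  else x / 3 * (x ^ 2 - 4 * x + 5) - 86 / 135

/-- `w_n(x,k) = P(Z_{n+x} ≤ n + x + 1/3 + k/(n+x))`. -/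
noncomputable def w (n : ℕ) (x k : ℝ) : ℝ :=
  (zMeasure (n + x) (Set.Iic ((n : ℝ) + x + 1 / 3 + k / (n + x)))).toReal

/-- `r_n(x,k) = k/(n+x)`. -/
noncomputable def r (n : ℕ) (x k : ℝ) : ℝ := k / (n + x)

/-- `g_n(u) = e^{-u} u^n`. -/
noncomputable def g (n : ℕ) (u : ℝ) : ℝ := Real.exp (-u) * u ^ n

/-- `c_n(v,x) = ((n+v+x)/(n+1+x))^{n+1} e^{1-v}`. -/
noncomputable def c (n : ℕ) (v x : ℝ) : ℝ :=
  (((n : ℝ) + v + x) / ((n : ℝ) + 1 + x)) ^ (n + 1) * Real.exp (1 - v)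

/-- `Δ_n(x,k) = ((n+1)!/g_{n+1}(n+1+x)) (w_{n+1}(x,k) - w_n(x,k))`. -/
noncomputable def Δfun (n : ℕ) (x k : ℝ) : ℝ :=
  ((n + 1).factorial : ℝ) / g (n + 1) ((n : ℝ) + 1 + x) * (w (n + 1) x k - w n x k)


section AuxProofs

lemma hasDerivAt_log1p {t : ℝ} (h : -1 < t) :
    HasDerivAt (fun u : ℝ => Real.log (1 + u)) (1 / (1 + t)) t := by
  have h1 : (0:ℝ) < 1 + t := by linarith
  have := ((hasDerivAt_id t).const_add (1:ℝ)).log h1.ne'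
  simpa using this

lemma antitone_aux {f : ℝ → ℝ} (f' : ℝ → ℝ) {u : ℝ} (hu : u ≤ 0)
    (hd : ∀ t ∈ Icc u 0, -1 < t → HasDerivAt f (f' t) t)
    (hd0 : ∀ t ∈ Ioo u 0, -1 < t → f' t ≤ 0) (hu1 : -1 < u) : f 0 ≤ f u := by
  have key : AntitoneOn f (Icc u 0) := by
    apply antitoneOn_of_deriv_nonpos (convex_Icc u 0)
    · intro t ht
      exact (hd t ht (lt_of_lt_of_le hu1 ht.1)).continuousAt.continuousWithinAt
    · intro t ht
      rw [interior_Icc] at ht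
      exact ((hd t (Ioo_subset_Icc_self ht) (lt_trans hu1 ht.1)).differentiableAt).differentiableWithinAt
    · intro t ht
      rw [interior_Icc] at ht
      have ht1 : -1 < t := lt_trans hu1 ht.1
      rw [(hd t (Ioo_subset_Icc_self ht) ht1).deriv]
      exact hd0 t ht ht1
  exact key ⟨le_refl u, hu⟩ ⟨hu, le_refl 0⟩ hu

lemma log_le_aux {u : ℝ} (hu1 : -1 < u) (hu0 : u ≤ 0) :
    Real.log (1 + u) ≤ u - u ^ 2 / 2 := by
  have h0 : (fun t : ℝ => t - t ^ 2 / 2 - Real.log (1 + t)) 0 ≤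
      (fun t : ℝ => t - t ^ 2 / 2 - Real.log (1 + t)) u := by
    refine antitone_aux (f := fun t => t - t ^ 2 / 2 - Real.log (1 + t)) (fun t => 1 - t - 1 / (1 + t)) hu0 ?_ ?_ hu1
    · intro t _ ht1
      have h := ((hasDerivAt_id t).fun_sub ((hasDerivAt_pow 2 t).div_const 2)).fun_sub
        (hasDerivAt_log1p ht1)
      exact h.congr_deriv (by push_cast; ring)
    · intro t ht ht1
      have h1 : (0:ℝ) < 1 + t := by linarith
      rw [sub_nonpos, le_div_iff₀ h1]
      nlinarith [sq_nonneg t, ht.2]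
  simp only [add_zero, Real.log_one] at h0
  linarith

lemma log_ge_aux {u : ℝ} (hu1 : -1 < u) (hu0 : u ≤ 0) :
    u - u ^ 2 / (2 * (1 + u)) ≤ Real.log (1 + u) := by
  have h0 : (fun t : ℝ => Real.log (1 + t) - t + t ^ 2 / (2 * (1 + t))) 0 ≤
      (fun t : ℝ => Real.log (1 + t) - t + t ^ 2 / (2 * (1 + t))) u := by
    refine antitone_aux (f := fun t => Real.log (1 + t) - t + t ^ 2 / (2 * (1 + t)))
      (fun t => 1 / (1 + t) - 1 + (2 * t * (2 * (1 + t)) - t ^ 2 * 2) / (2 * (1 + t)) ^ 2)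
      hu0 ?_ ?_ hu1
    · intro t _ ht1
      have h1 : (0:ℝ) < 1 + t := by linarith
      have h2 : (2 * (1 + t)) ≠ 0 := by positivity
      have hq : HasDerivAt (fun s : ℝ => s ^ 2 / (2 * (1 + s)))
          ((2 * t * (2 * (1 + t)) - t ^ 2 * 2) / (2 * (1 + t)) ^ 2) t := by
        have := HasDerivAt.fun_div (by simpa using hasDerivAt_pow 2 t)
          (((hasDerivAt_id t).const_add (1:ℝ)).const_mul 2) h2
        exact this.congr_deriv (by simp)
      exact ((hasDerivAt_log1p ht1).sub (hasDerivAt_id t)).add hq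
    · intro t ht ht1
      have h1 : (0:ℝ) < 1 + t := by linarith
      have hE : 1 / (1 + t) - 1 + (2 * t * (2 * (1 + t)) - t ^ 2 * 2) / (2 * (1 + t)) ^ 2
          = -t ^ 2 / (2 * (1 + t) ^ 2) := by
        field_simp
        ring
      rw [hE]
      apply div_nonpos_of_nonpos_of_nonneg (by nlinarith [sq_nonneg t]) (by positivity)
  simp only [add_zero, Real.log_one, Real.log_one] at h0
  norm_num at h0
  linarith

lemma gamma_sum (n : ℕ) (l : ℝ) :
    ∫ t in (0:ℝ)..l, t ^ n * Real.exp (-t)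
      = (Nat.factorial n : ℝ) *
        (1 - ∑ j ∈ Finset.range (n + 1), Real.exp (-l) * l ^ j / (Nat.factorial j : ℝ)) := by
  induction n with
  | zero =>
    have hd : ∀ t ∈ uIcc (0:ℝ) l, HasDerivAt (fun s => -Real.exp (-s)) (Real.exp (-t)) t := by
      intro t _
      simpa using ((hasDerivAt_neg t).exp).fun_neg
    have := intervalIntegral.integral_eq_sub_of_hasDerivAt hd
      ((continuous_neg.rexp).intervalIntegrable 0 l)
    simp only [pow_zero, one_mul]
    rw [this]
    simp [Nat.factorial]
    ring
  | succ n ih =>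
    have hu : ∀ t ∈ uIcc (0:ℝ) l, HasDerivAt (fun s : ℝ => s ^ (n + 1))
        (((n : ℝ) + 1) * t ^ n) t := by
      intro t _; simpa using hasDerivAt_pow (n + 1) t
    have hv : ∀ t ∈ uIcc (0:ℝ) l, HasDerivAt (fun s => -Real.exp (-s)) (Real.exp (-t)) t := by
      intro t _; simpa using ((hasDerivAt_neg t).exp).fun_neg
    have hint1 : IntervalIntegrable (fun t : ℝ => ((n : ℝ) + 1) * t ^ n) volume 0 l :=
      (by fun_prop : Continuous fun t : ℝ => ((n : ℝ) + 1) * t ^ n).intervalIntegrable 0 l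
    have hint2 : IntervalIntegrable (fun t : ℝ => Real.exp (-t)) volume 0 l :=
      (continuous_neg.rexp).intervalIntegrable 0 l
    have ibp := intervalIntegral.integral_mul_deriv_eq_deriv_mul hu hv hint1 hint2
    have heq : ∫ t in (0:ℝ)..l, t ^ (n + 1) * Real.exp (-t)
        = -(l ^ (n + 1) * Real.exp (-l)) + ((n : ℝ) + 1) * ∫ t in (0:ℝ)..l, t ^ n * Real.exp (-t) := by
      rw [ibp]
      rw [← intervalIntegral.integral_const_mul]
      rw [show (∫ t in (0:ℝ)..l, ((n:ℝ)+1) * t ^ n * -Real.exp (-t))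
          = ∫ t in (0:ℝ)..l, -(((n:ℝ)+1) * (t ^ n * Real.exp (-t))) from by
        congr 1; ext t; ring]
      rw [intervalIntegral.integral_neg]
      ring
    rw [heq, ih, Finset.sum_range_succ (n := n + 1)]
    rw [Nat.factorial_succ]
    push_cast
    field_simp
    ring


noncomputable def phifun (n : ℕ) (s : ℝ) : ℝ :=
  (1 + s / Real.sqrt n) ^ n * Real.exp (-(Real.sqrt n * s))

lemma sqrt_n_tendsto : Tendsto (fun n : ℕ => Real.sqrt n) atTop atTop := by
  have h : Tendsto (fun x : ℝ => x ^ ((1:ℝ)/2)) atTop atTop := tendsto_rpow_atTop (by norm_num)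
  have := h.comp (tendsto_natCast_atTop_atTop (R := ℝ))
  refine this.congr fun n => ?_
  rw [Function.comp_apply]
  exact (Real.sqrt_eq_rpow _).symm

lemma one_add_div_pos {n : ℕ} (hn : 1 ≤ n) {s : ℝ} (hs : -Real.sqrt n < s) :
    0 < 1 + s / Real.sqrt n := by
  have hsq : (0:ℝ) < Real.sqrt n := Real.sqrt_pos.2 (by exact_mod_cast hn)
  have h2 : (-1 : ℝ) < s / Real.sqrt n := (lt_div_iff₀ hsq).2 (by linarith)
  linarith

lemma phifun_eq_exp {n : ℕ} (hn : 1 ≤ n) {s : ℝ} (hs : -Real.sqrt n < s) :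
    phifun n s = Real.exp (n * Real.log (1 + s / Real.sqrt n) - Real.sqrt n * s) := by
  have h1 : 0 < 1 + s / Real.sqrt n := one_add_div_pos hn hs
  rw [phifun]
  nth_rewrite 1 [← Real.exp_log h1]
  rw [← Real.exp_nat_mul, ← Real.exp_add]
  ring_nf

lemma key_upper {n : ℕ} (hn : 1 ≤ n) {s : ℝ} (hs : -Real.sqrt n < s) (hs0 : s ≤ 0) :
    (n : ℝ) * Real.log (1 + s / Real.sqrt n) - Real.sqrt n * s ≤ -s ^ 2 / 2 := by
  have hsq : (0:ℝ) < Real.sqrt n := Real.sqrt_pos.2 (by exact_mod_cast hn)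
  have hnn : Real.sqrt n * Real.sqrt n = (n : ℝ) := Real.mul_self_sqrt (Nat.cast_nonneg n)
  set u := s / Real.sqrt n with hu
  have hu1 : -1 < u := by
    rw [hu, lt_div_iff₀ hsq]; linarith
  have hu0 : u ≤ 0 := div_nonpos_of_nonpos_of_nonneg hs0 hsq.le
  have hlog := log_le_aux hu1 hu0
  have hs2 : u * Real.sqrt n = s := by rw [hu]; exact div_mul_cancel₀ s hsq.ne'
  have h1 : (n : ℝ) * u = Real.sqrt n * s := by
    linear_combination (-u) * hnn + Real.sqrt n * hs2
  have h2 : (n : ℝ) * u ^ 2 = s ^ 2 := by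
    linear_combination (-u^2) * hnn + (u * Real.sqrt n + s) * hs2
  have := mul_le_mul_of_nonneg_left hlog (Nat.cast_nonneg n : (0:ℝ) ≤ n)
  nlinarith [this]

lemma key_lower {n : ℕ} (hn : 1 ≤ n) {s : ℝ} (hs : -Real.sqrt n < s) (hs0 : s ≤ 0) :
    -s ^ 2 / (2 * (1 + s / Real.sqrt n)) ≤
      (n : ℝ) * Real.log (1 + s / Real.sqrt n) - Real.sqrt n * s := by
  have hsq : (0:ℝ) < Real.sqrt n := Real.sqrt_pos.2 (by exact_mod_cast hn)
  have hnn : Real.sqrt n * Real.sqrt n = (n : ℝ) := Real.mul_self_sqrt (Nat.cast_nonneg n)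
  set u := s / Real.sqrt n with hu
  have h1p : 0 < 1 + u := one_add_div_pos hn hs
  have hu1 : -1 < u := by linarith
  have hu0 : u ≤ 0 := div_nonpos_of_nonpos_of_nonneg hs0 hsq.le
  have hlog := log_ge_aux hu1 hu0
  have hs2 : u * Real.sqrt n = s := by rw [hu]; exact div_mul_cancel₀ s hsq.ne'
  have h1 : (n : ℝ) * u = Real.sqrt n * s := by
    linear_combination (-u) * hnn + Real.sqrt n * hs2
  have h2 : (n : ℝ) * u ^ 2 = s ^ 2 := by
    linear_combination (-u^2) * hnn + (u * Real.sqrt n + s) * hs2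
  have hmul := mul_le_mul_of_nonneg_left hlog (Nat.cast_nonneg n : (0:ℝ) ≤ n)
  have hexp : (n:ℝ) * (u - u ^ 2 / (2 * (1 + u))) = Real.sqrt n * s - s ^ 2 / (2 * (1 + u)) := by
    rw [mul_sub, h1, mul_div_assoc'] ; rw [h2]
  rw [hexp] at hmul
  rw [neg_div]
  linarith

lemma nu_eq {n : ℕ} (hn : 1 ≤ n) (s : ℝ) : (n : ℝ) * (s / Real.sqrt n) = Real.sqrt n * s := by
  have hsq : (0:ℝ) < Real.sqrt n := Real.sqrt_pos.2 (by exact_mod_cast hn)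
  have hnn : Real.sqrt n * Real.sqrt n = (n : ℝ) := Real.mul_self_sqrt (Nat.cast_nonneg n)
  have hs2 : s / Real.sqrt n * Real.sqrt n = s := div_mul_cancel₀ s hsq.ne'
  linear_combination (-(s / Real.sqrt n)) * hnn + Real.sqrt n * hs2

lemma gauss_integral_Iic : ∫ s in Iic (0:ℝ), Real.exp (-s ^ 2 / 2) = Real.sqrt (π / 2) := by
  have hfun : (fun s : ℝ => Real.exp (-s ^ 2 / 2)) = fun s => Real.exp (-(1/2) * s ^ 2) := by
    ext s; ring_nf
  have hInt : Integrable (fun s : ℝ => Real.exp (-s ^ 2 / 2)) := by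
    rw [hfun]; exact integrable_exp_neg_mul_sq (by norm_num)
  have htot : ∫ s : ℝ, Real.exp (-s ^ 2 / 2) = Real.sqrt (2 * π) := by
    rw [hfun, integral_gaussian]
    rw [show π / (1/2:ℝ) = 2 * π by ring]
  have hsym : ∫ s in Ioi (0:ℝ), Real.exp (-s ^ 2 / 2) = ∫ s in Iic (0:ℝ), Real.exp (-s ^ 2 / 2) := by
    rw [show Ioi (0:ℝ) = Ioi (-(0:ℝ)) by norm_num, ← integral_comp_neg_Iic]
    congr 1; ext s; ring_nf
  have hsplit : (∫ s in Iic (0:ℝ), Real.exp (-s ^ 2 / 2))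
      + ∫ s in Ioi (0:ℝ), Real.exp (-s ^ 2 / 2) = Real.sqrt (2 * π) := by
    rw [← htot, ← setIntegral_union (Iic_disjoint_Ioi le_rfl) measurableSet_Ioi
      hInt.integrableOn hInt.integrableOn, Iic_union_Ioi, setIntegral_univ]
  rw [hsym] at hsplit
  have h4 : Real.sqrt (2 * π) = 2 * Real.sqrt (π / 2) := by
    rw [show (2:ℝ) * π = 2 ^ 2 * (π / 2) by ring, Real.sqrt_mul (by positivity),
      Real.sqrt_sq (by norm_num)]
  linarith

lemma J_tendsto {x : ℝ} (hx0 : 0 ≤ x) (hx1 : x < 1) :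
    Tendsto (fun n : ℕ => ∫ s in (-Real.sqrt n)..(x / Real.sqrt n), phifun n s)
      atTop (nhds (Real.sqrt (π / 2))) := by
  set F : ℕ → ℝ → ℝ := fun n => (Ioc (-Real.sqrt n) (x / Real.sqrt n)).indicator (phifun n)
    with hF
  set f : ℝ → ℝ := (Iic (0:ℝ)).indicator (fun s => Real.exp (-s ^ 2 / 2)) with hf
  set bound : ℝ → ℝ := fun s =>
    (Iic (0:ℝ)).indicator (fun s => Real.exp (-s ^ 2 / 2)) s
      + (Ioc (0:ℝ) 1).indicator (fun _ => (1:ℝ)) s with hbound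
  have hphi_cont : ∀ n : ℕ, Continuous (phifun n) := by
    intro n
    unfold phifun
    exact ((continuous_const.add (continuous_id.div_const _)).pow n).mul
      ((continuous_const.mul continuous_id).neg.rexp)
  have hgauss_int : Integrable (fun s : ℝ => Real.exp (-s ^ 2 / 2)) := by
    have : (fun s : ℝ => Real.exp (-s ^ 2 / 2)) = fun s => Real.exp (-(1/2) * s ^ 2) := by
      ext s; ring_nf
    rw [this]; exact integrable_exp_neg_mul_sq (by norm_num)
  have hsqrt1 : ∀ n : ℕ, 1 ≤ n → (1:ℝ) ≤ Real.sqrt n := by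
    intro n hn
    rw [show (1:ℝ) = Real.sqrt 1 from (Real.sqrt_one).symm]
    exact Real.sqrt_le_sqrt (by exact_mod_cast hn)
  have hDCT : Tendsto (fun n => ∫ s, F n s) atTop (nhds (∫ s, f s)) := by
    apply tendsto_integral_filter_of_dominated_convergence bound
    · exact Filter.Eventually.of_forall fun n =>
        ((hphi_cont n).aestronglyMeasurable).indicator measurableSet_Ioc
    · filter_upwards [eventually_ge_atTop 1] with n hn
      apply Filter.Eventually.of_forall
      intro s
      by_cases hsmem : s ∈ Ioc (-Real.sqrt n) (x / Real.sqrt n)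
      · rw [hF]
        simp only [indicator_of_mem hsmem]
        have hbase : 0 < 1 + s / Real.sqrt n := one_add_div_pos hn hsmem.1
        have hphi_nonneg : 0 ≤ phifun n s := by
          unfold phifun; positivity
        rw [Real.norm_eq_abs, abs_of_nonneg hphi_nonneg]
        rcases le_or_gt s 0 with h0 | h0
        · have hkey := key_upper hn hsmem.1 h0
          have hle : phifun n s ≤ Real.exp (-s ^ 2 / 2) := by
            rw [phifun_eq_exp hn hsmem.1]
            exact Real.exp_le_exp.2 hkey
          have : bound s = Real.exp (-s ^ 2 / 2) := by
            rw [hbound]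
            simp only [indicator_of_mem (mem_Iic.2 h0),
              indicator_of_notMem (fun h : s ∈ Ioc (0:ℝ) 1 => absurd h.1 (not_lt.2 h0)), add_zero]
          rw [this]; exact hle
        · have hs1 : s ≤ 1 := by
            refine le_trans hsmem.2 (le_trans (div_le_self hx0 (hsqrt1 n hn)) hx1.le)
          have hle1 : phifun n s ≤ 1 := by
            rw [phifun_eq_exp hn hsmem.1, Real.exp_le_one_iff]
            have hlog : Real.log (1 + s / Real.sqrt n) ≤ s / Real.sqrt n := by
              have := Real.log_le_sub_one_of_pos hbase
              linarith
            have := mul_le_mul_of_nonneg_left hlog (Nat.cast_nonneg n : (0:ℝ) ≤ n)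
            rw [nu_eq hn s] at this
            linarith
          have : bound s = 1 := by
            rw [hbound]
            simp only [indicator_of_notMem (fun h : s ∈ Iic (0:ℝ) => absurd (mem_Iic.1 h) (not_le.2 h0)),
              indicator_of_mem (mem_Ioc.2 ⟨h0, hs1⟩), zero_add]
          rw [this]; exact hle1
      · rw [hF]
        simp only [indicator_of_notMem hsmem, norm_zero]
        rw [hbound]
        apply add_nonneg
        · exact indicator_nonneg (fun s _ => Real.exp_nonneg _) s
        · exact indicator_nonneg (fun s _ => by norm_num) s
    · apply Integrable.add
      · exact hgauss_int.indicator measurableSet_Iic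
      · rw [integrable_indicator_iff measurableSet_Ioc]
        exact integrableOn_const measure_Ioc_lt_top.ne
    · have h0 : ∀ᵐ s : ℝ, s ≠ 0 := by
        rw [ae_iff]
        simp only [ne_eq, not_not]
        simp [show {a : ℝ | a = 0} = {0} from rfl]
      filter_upwards [h0] with s hs
      rcases hs.lt_or_gt with hneg | hpos
      · -- s < 0
        have hfs : f s = Real.exp (-s ^ 2 / 2) := by
          rw [hf]; exact indicator_of_mem (mem_Iic.2 hneg.le) _
        rw [hfs]
        have hev : ∀ᶠ n : ℕ in atTop, F n s
            = Real.exp ((n : ℝ) * Real.log (1 + s / Real.sqrt n) - Real.sqrt n * s) := by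
          filter_upwards [eventually_ge_atTop 1, sqrt_n_tendsto.eventually_gt_atTop (-s)]
            with n hn hsn
          have hmem : s ∈ Ioc (-Real.sqrt n) (x / Real.sqrt n) :=
            ⟨neg_lt.1 hsn, le_trans hneg.le
              (div_nonneg hx0 (Real.sqrt_nonneg _))⟩
          rw [hF]
          simp only [indicator_of_mem hmem]
          exact phifun_eq_exp hn hmem.1
        refine Tendsto.congr' (Filter.EventuallyEq.symm hev) ?_
        have hcomp : Tendsto (fun n : ℕ => (n : ℝ) * Real.log (1 + s / Real.sqrt n)
            - Real.sqrt n * s) atTop (nhds (-s ^ 2 / 2)) := by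
          have hdiv : Tendsto (fun n : ℕ => s / Real.sqrt n) atTop (nhds 0) :=
            Tendsto.div_atTop tendsto_const_nhds sqrt_n_tendsto
          have hden : Tendsto (fun n : ℕ => 2 * (1 + s / Real.sqrt n)) atTop
              (nhds (2 * (1 + 0))) := (tendsto_const_nhds.add hdiv).const_mul 2
          have hlow : Tendsto (fun n : ℕ => -s ^ 2 / (2 * (1 + s / Real.sqrt n))) atTop
              (nhds (-s ^ 2 / (2 * (1 + 0)))) :=
            tendsto_const_nhds.div hden (by norm_num)
          norm_num at hlow
          refine tendsto_of_tendsto_of_tendsto_of_le_of_le' hlow tendsto_const_nhds ?_ ?_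
          · filter_upwards [eventually_ge_atTop 1, sqrt_n_tendsto.eventually_gt_atTop (-s)]
              with n hn hsn
            exact key_lower hn (neg_lt.1 hsn) hneg.le
          · filter_upwards [eventually_ge_atTop 1, sqrt_n_tendsto.eventually_gt_atTop (-s)]
              with n hn hsn
            exact key_upper hn (neg_lt.1 hsn) hneg.le
        exact (Real.continuous_exp.tendsto _).comp hcomp
      · -- s > 0
        have hfs : f s = 0 := by
          rw [hf]; exact indicator_of_notMem (by simpa using hpos) _
        rw [hfs]
        have hdiv : Tendsto (fun n : ℕ => x / Real.sqrt n) atTop (nhds 0) :=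
          Tendsto.div_atTop tendsto_const_nhds sqrt_n_tendsto
        have hev : ∀ᶠ n : ℕ in atTop, F n s = 0 := by
          filter_upwards [hdiv.eventually_lt_const hpos] with n hn2
          rw [hF]
          exact indicator_of_notMem (fun hmem => absurd hmem.2 (not_le.2 hn2)) _
        exact Tendsto.congr' (Filter.EventuallyEq.symm hev) tendsto_const_nhds
  have hf_int : ∫ s, f s = Real.sqrt (π / 2) := by
    rw [hf, integral_indicator measurableSet_Iic]
    exact gauss_integral_Iic
  rw [hf_int] at hDCT
  refine Tendsto.congr' ?_ hDCT
  filter_upwards [eventually_ge_atTop 1] with n hn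
  rw [hF]
  simp only []
  rw [integral_indicator measurableSet_Ioc, ← intervalIntegral.integral_of_le
    (le_trans (neg_nonpos.2 (Real.sqrt_nonneg _)) (div_nonneg hx0 (Real.sqrt_nonneg _)))]

lemma sqrt2_stirling : Real.sqrt (π / 2) / (Real.sqrt 2 * Real.sqrt π) = 1 / 2 := by
  have h2a : Real.sqrt 2 * Real.sqrt π = 2 * Real.sqrt (π / 2) := by
    rw [← Real.sqrt_mul (by norm_num : (0:ℝ) ≤ 2) π, show (2:ℝ) * π = 2 ^ 2 * (π / 2) by ring,
      Real.sqrt_mul (by positivity), Real.sqrt_sq (by norm_num)]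
  have hpos : (0:ℝ) < Real.sqrt (π / 2) := Real.sqrt_pos.2 (by positivity)
  rw [h2a, div_eq_iff (by positivity)]
  ring

lemma factorial_eq_stirling {n : ℕ} (hn : 1 ≤ n) :
    (Nat.factorial n : ℝ) = Stirling.stirlingSeq n *
      (Real.sqrt 2 * Real.sqrt n * ((n:ℝ) ^ n * Real.exp (-(n:ℝ)))) := by
  have hpow : ((n:ℝ) / Real.exp 1) ^ n = (n:ℝ) ^ n * Real.exp (-(n:ℝ)) := by
    rw [div_pow, Real.exp_one_pow, Real.exp_neg]
    ring
  have hsq : Real.sqrt (2 * n) = Real.sqrt 2 * Real.sqrt n :=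
    Real.sqrt_mul (by norm_num) _
  have hden : Real.sqrt (2 * (n:ℝ)) * ((n:ℝ) / Real.exp 1) ^ n ≠ 0 := by
    have h1 : (0:ℝ) < n := by exact_mod_cast hn
    positivity
  rw [Stirling.stirlingSeq, ← hpow, ← hsq]
  field_simp

lemma laplace_half {x : ℝ} (hx0 : 0 ≤ x) (hx1 : x < 1) :
    Tendsto (fun n : ℕ => (∫ t in (0:ℝ)..((n:ℝ) + x), t ^ n * Real.exp (-t))
      / (Nat.factorial n : ℝ)) atTop (nhds (1 / 2)) := by
  have hstir : Tendsto (fun n : ℕ => Real.sqrt 2 * Stirling.stirlingSeq n) atTop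
      (nhds (Real.sqrt 2 * Real.sqrt π)) :=
    tendsto_const_nhds.mul Stirling.tendsto_stirlingSeq_sqrt_pi
  have hne : Real.sqrt 2 * Real.sqrt π ≠ 0 := by positivity
  have hmain : Tendsto (fun n : ℕ =>
      (∫ s in (-Real.sqrt n)..(x / Real.sqrt n), phifun n s)
        / (Real.sqrt 2 * Stirling.stirlingSeq n)) atTop
      (nhds (Real.sqrt (π / 2) / (Real.sqrt 2 * Real.sqrt π))) :=
    (J_tendsto hx0 hx1).div hstir hne
  rw [sqrt2_stirling] at hmain
  refine Tendsto.congr' ?_ hmain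
  filter_upwards [eventually_ge_atTop 1] with n hn
  have hnR : (0:ℝ) < n := by exact_mod_cast hn
  have hsq : (0:ℝ) < Real.sqrt n := Real.sqrt_pos.2 hnR
  have hnn : Real.sqrt n * Real.sqrt n = (n : ℝ) := Real.mul_self_sqrt (Nat.cast_nonneg n)
  -- change of variables
  have hcv := intervalIntegral.integral_comp_mul_add (a := -Real.sqrt n)
    (b := x / Real.sqrt n) (f := fun t => t ^ n * Real.exp (-t)) hsq.ne' ((n : ℝ))
  rw [show Real.sqrt n * -Real.sqrt n + (n:ℝ) = 0 by rw [mul_neg, hnn]; ring,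
    show Real.sqrt n * (x / Real.sqrt n) + (n:ℝ) = 0 + ((n:ℝ) + x) by
      rw [mul_div_cancel₀ _ hsq.ne']; ring] at hcv
  rw [zero_add] at hcv
  have hint : ∀ s : ℝ, (Real.sqrt n * s + (n:ℝ)) ^ n * Real.exp (-(Real.sqrt n * s + (n:ℝ)))
      = (n:ℝ) ^ n * Real.exp (-(n:ℝ)) * phifun n s := by
    intro s
    have h1 := nu_eq hn s
    have harg : Real.sqrt n * s + (n:ℝ) = (n:ℝ) * (1 + s / Real.sqrt n) := by
      linear_combination -h1
    rw [phifun, harg, mul_pow, show -((n:ℝ) * (1 + s / Real.sqrt n))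
        = -(Real.sqrt n * s) + -(n:ℝ) by linear_combination -h1, Real.exp_add]
    ring
  simp only [hint] at hcv
  rw [intervalIntegral.integral_const_mul] at hcv
  -- hcv : (n^n e^{-n}) * J_n = (√n)⁻¹ • ∫_0^{n+x} f
  have hJ : (∫ s in (-Real.sqrt n)..(x / Real.sqrt n), phifun n s)
      = (∫ t in (0:ℝ)..((n:ℝ) + x), t ^ n * Real.exp (-t))
        / (Real.sqrt n * ((n:ℝ) ^ n * Real.exp (-(n:ℝ)))) := by
    have hpos : (0:ℝ) < (n:ℝ) ^ n * Real.exp (-(n:ℝ)) := by positivity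
    rw [eq_div_iff (by positivity)]
    rw [smul_eq_mul] at hcv
    field_simp at hcv ⊢
    linarith [hcv]
  rw [hJ, factorial_eq_stirling hn]
  rw [div_div]
  congr 1
  ring

lemma pow_exp_le (m : ℕ) {l : ℝ} (hl : 0 < l) :
    l ^ m * Real.exp (-l) ≤ (m:ℝ) ^ m * Real.exp (-(m:ℝ)) := by
  rcases Nat.eq_zero_or_pos m with h0 | hm
  · subst h0
    simp only [pow_zero, one_mul, Nat.cast_zero, neg_zero, Real.exp_zero]
    exact Real.exp_le_one_iff.2 (by linarith)
  · have hmR : (0:ℝ) < m := by exact_mod_cast hm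
    have hlog : Real.log (l / m) ≤ l / m - 1 := Real.log_le_sub_one_of_pos (by positivity)
    have hdiv : Real.log (l / m) = Real.log l - Real.log m := Real.log_div hl.ne' hmR.ne'
    have hmul := mul_le_mul_of_nonneg_left hlog hmR.le
    rw [hdiv] at hmul
    have h2 : (m:ℝ) * (l / m - 1) = l - m := by field_simp
    rw [h2, mul_sub] at hmul
    have hkey : (m:ℝ) * Real.log l - l ≤ (m:ℝ) * Real.log (m:ℝ) - (m:ℝ) := by linarith
    have hL : l ^ m * Real.exp (-l) = Real.exp ((m:ℝ) * Real.log l - l) := by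
      nth_rewrite 1 [← Real.exp_log hl]
      rw [← Real.exp_nat_mul, ← Real.exp_add]
      ring_nf
    have hR : (m:ℝ) ^ m * Real.exp (-(m:ℝ)) = Real.exp ((m:ℝ) * Real.log (m:ℝ) - (m:ℝ)) := by
      nth_rewrite 1 [← Real.exp_log hmR]
      rw [← Real.exp_nat_mul, ← Real.exp_add]
      ring_nf
    rw [hL, hR]
    exact Real.exp_le_exp.2 hkey

lemma mterm_tendsto :
    Tendsto (fun m : ℕ => (m:ℝ) ^ m * Real.exp (-(m:ℝ)) / (Nat.factorial m : ℝ))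
      atTop (nhds 0) := by
  have hd : Tendsto (fun m : ℕ => Real.sqrt 2 * Real.sqrt m * Stirling.stirlingSeq m)
      atTop atTop := by
    have hs2 : Tendsto (fun m : ℕ => Real.sqrt 2 * Real.sqrt m) atTop atTop :=
      sqrt_n_tendsto.const_mul_atTop (show (0:ℝ) < Real.sqrt 2 by positivity)
    have := Filter.Tendsto.pos_mul_atTop (Real.sqrt_pos.2 Real.pi_pos)
      Stirling.tendsto_stirlingSeq_sqrt_pi hs2
    exact this.congr fun m => mul_comm _ _
  have hinv : Tendsto (fun m : ℕ =>
      (Real.sqrt 2 * Real.sqrt m * Stirling.stirlingSeq m)⁻¹) atTop (nhds 0) :=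
    hd.inv_tendsto_atTop
  refine Tendsto.congr' ?_ hinv
  filter_upwards [eventually_ge_atTop 1] with m hm
  have hto := factorial_eq_stirling hm
  have hs : 0 < Stirling.stirlingSeq m := by
    rcases Nat.exists_eq_add_of_le hm with ⟨k, rfl⟩
    simpa [add_comm] using Stirling.stirlingSeq'_pos k
  have hmR : (0:ℝ) < m := by exact_mod_cast hm
  have hfac : (0:ℝ) < (Nat.factorial m : ℝ) := by exact_mod_cast Nat.factorial_pos m
  rw [eq_div_iff hfac.ne', hto]
  have h1 : (0:ℝ) < (m:ℝ) ^ m * Real.exp (-(m:ℝ)) := by positivity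
  field_simp

lemma term_tendsto (x : ℝ) (hx0 : 0 ≤ x) (j : ℕ) :
    Tendsto (fun n : ℕ => ((n:ℝ) + x) ^ (n + j) * Real.exp (-((n:ℝ) + x))
      / (Nat.factorial (n + j) : ℝ)) atTop (nhds 0) := by
  have hupper := mterm_tendsto.comp (tendsto_add_atTop_nat j)
  refine tendsto_of_tendsto_of_tendsto_of_le_of_le' tendsto_const_nhds hupper ?_ ?_
  · filter_upwards [eventually_ge_atTop 1] with n hn
    have h0 : (0:ℝ) < (n:ℝ) + x := by
      have : (1:ℝ) ≤ n := by exact_mod_cast hn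
      linarith
    positivity
  · filter_upwards [eventually_ge_atTop 1] with n hn
    have h0 : (0:ℝ) < (n:ℝ) + x := by
      have : (1:ℝ) ≤ n := by exact_mod_cast hn
      linarith
    have hfac : (0:ℝ) < (Nat.factorial (n + j) : ℝ) := by
      exact_mod_cast Nat.factorial_pos (n + j)
    have := pow_exp_le (n + j) h0
    simp only [Function.comp_apply]
    exact (div_le_div_iff_of_pos_right hfac).2 this

lemma measurable_natCastR : Measurable (Nat.cast : ℕ → ℝ) := measurable_from_top

lemma map_poisson_prob (r : ℝ≥0) :
    IsProbabilityMeasure (Measure.map (Nat.cast : ℕ → ℝ) (poissonMeasure r)) :=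
  Measure.isProbabilityMeasure_map measurable_natCastR.aemeasurable

lemma zMeasure_bounds (l : ℝ) (t : ℝ) :
    (Measure.map (Nat.cast : ℕ → ℝ) (poissonMeasure l.toNNReal)) (Iic (t - 1))
      ≤ zMeasure l (Iic t)
    ∧ zMeasure l (Iic t)
      ≤ (Measure.map (Nat.cast : ℕ → ℝ) (poissonMeasure l.toNNReal)) (Iic t) := by
  set μ := Measure.map (Nat.cast : ℕ → ℝ) (poissonMeasure l.toNNReal) with hμ
  haveI : IsProbabilityMeasure μ := map_poisson_prob _
  have hmeas : Measurable (fun p : ℝ × ℝ => p.1 + p.2) := measurable_fst.add measurable_snd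
  have hA : MeasurableSet ((fun p : ℝ × ℝ => p.1 + p.2) ⁻¹' (Iic t)) :=
    hmeas measurableSet_Iic
  have hmap : zMeasure l (Iic t)
      = (μ.prod (volume.restrict (Ioo (0:ℝ) 1))) ((fun p : ℝ × ℝ => p.1 + p.2) ⁻¹' (Iic t)) := by
    rw [zMeasure, Measure.map_apply hmeas measurableSet_Iic]
  have hprod : μ.prod (volume.restrict (Ioo (0:ℝ) 1))
      = (μ.prod volume).restrict (univ ×ˢ Ioo (0:ℝ) 1) := by
    rw [← Measure.prod_restrict, Measure.restrict_univ]
  have happ : zMeasure l (Iic t) = (μ.prod volume)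
      (((fun p : ℝ × ℝ => p.1 + p.2) ⁻¹' (Iic t)) ∩ (univ ×ˢ Ioo (0:ℝ) 1)) := by
    rw [hmap, hprod, Measure.restrict_apply hA]
  constructor
  · rw [happ]
    have hsub : (Iic (t - 1) ×ˢ Ioo (0:ℝ) 1)
        ⊆ ((fun p : ℝ × ℝ => p.1 + p.2) ⁻¹' (Iic t)) ∩ (univ ×ˢ Ioo (0:ℝ) 1) := by
      rintro ⟨a, b⟩ ⟨ha, hb⟩
      refine ⟨?_, mem_univ _, hb⟩
      have : a ≤ t - 1 := ha
      have hb1 : b < 1 := hb.2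
      simp only [mem_preimage, mem_Iic]
      linarith
    calc μ (Iic (t - 1)) = μ (Iic (t-1)) * volume (Ioo (0:ℝ) 1) := by
          simp [Real.volume_Ioo]
      _ = (μ.prod volume) (Iic (t - 1) ×ˢ Ioo (0:ℝ) 1) := (Measure.prod_prod _ _).symm
      _ ≤ _ := measure_mono hsub
  · rw [happ]
    have hsub : ((fun p : ℝ × ℝ => p.1 + p.2) ⁻¹' (Iic t)) ∩ (univ ×ˢ Ioo (0:ℝ) 1)
        ⊆ Iic t ×ˢ Ioo (0:ℝ) 1 := by
      rintro ⟨a, b⟩ ⟨ha, -, hb⟩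
      have h1 : a + b ≤ t := ha
      have hb0 : 0 < b := hb.1
      exact ⟨by simp only [mem_Iic]; linarith, hb⟩
    calc (μ.prod volume) _ ≤ (μ.prod volume) (Iic t ×ˢ Ioo (0:ℝ) 1) := measure_mono hsub
      _ = μ (Iic t) * volume (Ioo (0:ℝ) 1) := Measure.prod_prod _ _
      _ = μ (Iic t) := by simp [Real.volume_Ioo]

lemma map_poisson_Iic_sum (r : ℝ≥0) {c : ℝ} {m : ℕ}
    (h : ((Nat.cast : ℕ → ℝ) ⁻¹' (Iic c) : Set ℕ) = ↑(Finset.range m)) :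
    ((Measure.map (Nat.cast : ℕ → ℝ) (poissonMeasure r)) (Iic c)).toReal
      = ∑ j ∈ Finset.range m, poissonPMFReal r j := by
  rw [Measure.map_apply measurable_natCastR measurableSet_Iic, h, ← sum_measure_singleton]
  simp_rw [poissonMeasure_singleton]
  rw [ENNReal.toReal_sum (fun a _ => ENNReal.ofReal_ne_top)]
  exact Finset.sum_congr rfl fun j _ => ENNReal.toReal_ofReal (by positivity)
end AuxProofs

theorem w_tendsto_half (x k : ℝ) (hx : x ∈ Set.Ico (0 : ℝ) 1) :
    Tendsto (fun n : ℕ => w n x k) atTop (nhds (1 / 2)) := by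
  obtain ⟨hx0, hx1⟩ := hx
  have hcoe : ∀ n : ℕ, ((((n:ℝ) + x).toNNReal : ℝ≥0) : ℝ) = (n:ℝ) + x := fun n =>
    Real.coe_toNNReal _ (by positivity)
  have hpmf : ∀ n j : ℕ, poissonPMFReal ((n:ℝ) + x).toNNReal j
      = Real.exp (-((n:ℝ) + x)) * ((n:ℝ) + x) ^ j / (Nat.factorial j : ℝ) := by
    intro n j
    rw [poissonPMFReal, hcoe n]
  set S : ℕ → ℝ := fun n => ∑ j ∈ Finset.range (n + 1),
    Real.exp (-((n:ℝ) + x)) * ((n:ℝ) + x) ^ j / (Nat.factorial j : ℝ) with hSdef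
  have hS : Tendsto S atTop (nhds (1 / 2)) := by
    have h1 := laplace_half hx0 hx1
    have h2 : Tendsto (fun n : ℕ => 1 - (∫ t in (0:ℝ)..((n:ℝ) + x), t ^ n * Real.exp (-t))
        / (Nat.factorial n : ℝ)) atTop (nhds (1 - 1/2)) := tendsto_const_nhds.sub h1
    rw [show (1 - 1/2 : ℝ) = 1/2 by norm_num] at h2
    refine h2.congr fun n => ?_
    have hfac : ((Nat.factorial n : ℝ)) ≠ 0 := by exact_mod_cast (Nat.factorial_pos n).ne'
    rw [gamma_sum n ((n:ℝ) + x), mul_comm, mul_div_assoc, div_self hfac, mul_one]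
    ring
  have hterm : ∀ j : ℕ, Tendsto (fun n : ℕ => Real.exp (-((n:ℝ) + x)) * ((n:ℝ) + x) ^ (n + j)
      / (Nat.factorial (n + j) : ℝ)) atTop (nhds 0) := by
    intro j
    refine (term_tendsto x hx0 j).congr fun n => ?_
    ring
  set L : ℕ → ℝ := fun n => ∑ j ∈ Finset.range n,
    Real.exp (-((n:ℝ) + x)) * ((n:ℝ) + x) ^ j / (Nat.factorial j : ℝ) with hLdef
  set U : ℕ → ℝ := fun n => ∑ j ∈ Finset.range (n + 3),
    Real.exp (-((n:ℝ) + x)) * ((n:ℝ) + x) ^ j / (Nat.factorial j : ℝ) with hUdef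
  have hL : Tendsto L atTop (nhds (1/2)) := by
    have h := hS.sub (hterm 0)
    rw [show (1/2 - 0 : ℝ) = 1/2 by norm_num] at h
    refine h.congr fun n => ?_
    simp only [Nat.add_zero, hSdef, hLdef, Finset.sum_range_succ]
    ring
  have hU : Tendsto U atTop (nhds (1/2)) := by
    have h := (hS.add (hterm 1)).add (hterm 2)
    rw [show (1/2 + 0 + 0 : ℝ) = 1/2 by norm_num] at h
    refine h.congr fun n => ?_
    rw [hUdef]
    simp only []
    rw [show n + 3 = (n + 2) + 1 by omega, Finset.sum_range_succ,
      show n + 2 = (n + 1) + 1 by omega, Finset.sum_range_succ, hSdef]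
  -- eventual bounds
  have hnx_atTop : Tendsto (fun n : ℕ => (n:ℝ) + x) atTop atTop :=
    tendsto_atTop_add_const_right atTop x tendsto_natCast_atTop_atTop
  have hr0 : Tendsto (fun n : ℕ => |k / ((n:ℝ) + x)|) atTop (nhds 0) := by
    have := (Tendsto.div_atTop (tendsto_const_nhds (x := k)) hnx_atTop).abs
    simpa using this
  have hrsmall : ∀ᶠ n : ℕ in atTop, |k / ((n:ℝ) + x)| < 1/3 :=
    hr0.eventually_lt_const (by norm_num)
  refine tendsto_of_tendsto_of_tendsto_of_le_of_le' hL hU ?_ ?_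
  · -- L n ≤ w n x k eventually
    filter_upwards [eventually_ge_atTop 1, hrsmall] with n hn hr
    obtain ⟨hrlo, hrhi⟩ := abs_lt.1 hr
    set l := (n:ℝ) + x with hl
    set t := (n:ℝ) + x + 1/3 + k / ((n:ℝ) + x) with ht
    set μ := Measure.map (Nat.cast : ℕ → ℝ) (poissonMeasure l.toNNReal) with hμdef
    haveI : IsProbabilityMeasure μ := map_poisson_prob _
    obtain ⟨hlow, hupp⟩ := zMeasure_bounds l t
    have hZne : zMeasure l (Iic t) ≠ ⊤ :=
      ne_top_of_le_ne_top (measure_ne_top μ _) hupp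
    have hw : w n x k = (zMeasure l (Iic t)).toReal := rfl
    have hmono : μ (Iic ((n:ℝ) - 1)) ≤ μ (Iic (t - 1)) := by
      apply measure_mono (Iic_subset_Iic.2 ?_)
      rw [ht]
      linarith
    have hset : ((Nat.cast : ℕ → ℝ) ⁻¹' (Iic ((n:ℝ) - 1)) : Set ℕ) = ↑(Finset.range n) := by
      ext j
      simp only [mem_preimage, mem_Iic, Finset.coe_range, mem_Iio]
      constructor
      · intro hj
        have h1 : (j:ℝ) + 1 ≤ (n:ℝ) := by linarith
        have h2 : ((j + 1 : ℕ) : ℝ) ≤ (n:ℝ) := by push_cast; linarith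
        exact_mod_cast h2
      · intro hj
        have h2 : (j + 1 : ℕ) ≤ n := hj
        have : ((j+1:ℕ):ℝ) ≤ (n:ℝ) := by exact_mod_cast h2
        push_cast at this
        linarith
    have hLn : L n = (μ (Iic ((n:ℝ) - 1))).toReal := by
      rw [hμdef, map_poisson_Iic_sum _ hset, hLdef]
      exact (Finset.sum_congr rfl fun j _ => hpmf n j).symm
    rw [hLn, hw]
    exact ENNReal.toReal_mono hZne (le_trans hmono hlow)
  · -- w n x k ≤ U n eventually
    filter_upwards [eventually_ge_atTop 1, hrsmall] with n hn hr
    obtain ⟨hrlo, hrhi⟩ := abs_lt.1 hr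
    set l := (n:ℝ) + x with hl
    set t := (n:ℝ) + x + 1/3 + k / ((n:ℝ) + x) with ht
    set μ := Measure.map (Nat.cast : ℕ → ℝ) (poissonMeasure l.toNNReal) with hμdef
    haveI : IsProbabilityMeasure μ := map_poisson_prob _
    obtain ⟨hlow, hupp⟩ := zMeasure_bounds l t
    have hw : w n x k = (zMeasure l (Iic t)).toReal := rfl
    have hmono : μ (Iic t) ≤ μ (Iic ((n:ℝ) + 2)) := by
      apply measure_mono (Iic_subset_Iic.2 ?_)
      rw [ht]
      linarith
    have hset : ((Nat.cast : ℕ → ℝ) ⁻¹' (Iic ((n:ℝ) + 2)) : Set ℕ)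
        = ↑(Finset.range (n + 3)) := by
      ext j
      simp only [mem_preimage, mem_Iic, Finset.coe_range, mem_Iio]
      constructor
      · intro hj
        have h2 : (j:ℝ) ≤ ((n + 2 : ℕ) : ℝ) := by push_cast; linarith
        have h3 : j ≤ n + 2 := by exact_mod_cast h2
        omega
      · intro hj
        have h2 : j ≤ n + 2 := by omega
        have h3 : (j:ℝ) ≤ ((n + 2 : ℕ):ℝ) := by exact_mod_cast h2
        push_cast at h3
        linarith
    have hUn : U n = (μ (Iic ((n:ℝ) + 2))).toReal := by
      rw [hμdef, map_poisson_Iic_sum _ hset, hUdef]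
      exact (Finset.sum_congr rfl fun j _ => hpmf n j).symm
    rw [hUn, hw]
    exact ENNReal.toReal_mono (measure_ne_top μ _) (le_trans hupp hmono)
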